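/- Let A be the metabelian algebra generated by one element a subject to the condition that every word containing two or more subwords equal to a² is zero. For every n ≥ 2, the 2^{n−2} elements a²·w(L_a, R_a), where w ranges over all words of length n−2 in the left-multiplication operator L_a and right-multiplication operator R_a, are linearly independent in A. -/

import Mathlib

noncomputable section

open Filter Topology

/-- Is a free-magma element a single leaf? -/
def FreeMagma.isLeaf {X : Type*} : FreeMagma X → Bool
  | .of _ => true
  | .mul _ _ => false

/-- The number of occurrences of the subword `a·a` in a monomial in one generator `a`. -/
def countSq : FreeMagma Unit → ℕ
  | .of _ => 0
  | .mul x y => countSq x + countSq y + (if x.isLeaf && y.isLeaf then 1 else 0)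

variable (F : Type) [Field F] [CharZero F]

/-- The free nonassociative (non-unital) algebra on one generator `a`. -/
abbrev FA := FreeNonUnitalNonAssocAlgebra F Unit

/-- The monomial of `FA F` corresponding to a magma word. -/
def mono (m : FreeMagma Unit) : FA F := MonoidAlgebra.single m (1 : F)

/-- The relations ideal of `A`: the span of all monomials containing two or more
subwords equal to `a²`.  The algebra `A` of the paper is `FA F` modulo `relI F`. -/
def relI : Submodule F (FA F) :=
  Submodule.span F {x : FA F | ∃ m : FreeMagma Unit, 2 ≤ countSq m ∧ x = mono F m}

/-- Apply a word in `L_a` (letter `0`) and `R_a` (letter `1`) to a magma element,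
left-to-right. -/
def chain (t : FreeMagma Unit) : List (Fin 2) → FreeMagma Unit
  | [] => t
  | b :: rest => chain (if b = 1 then t * FreeMagma.of () else FreeMagma.of () * t) rest

/-- The monomial `a²`. -/
def aSq : FreeMagma Unit := FreeMagma.of () * FreeMagma.of ()



lemma chain_isLeaf (l : List (Fin 2)) : ∀ t : FreeMagma Unit, t.isLeaf = false →
    (chain t l).isLeaf = false := by
  induction l with
  | nil => intro t ht; simpa [chain] using ht
  | cons b rest ih =>
    intro t ht
    simp only [chain]
    split <;> exact ih _ rfl

lemma countSq_chain (l : List (Fin 2)) : ∀ t : FreeMagma Unit, t.isLeaf = false →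
    countSq (chain t l) = countSq t := by
  induction l with
  | nil => intro t _; rfl
  | cons b rest ih =>
    intro t ht
    cases t with
    | of x => simp [FreeMagma.isLeaf] at ht
    | mul x y =>
      simp only [chain]
      split
      · rw [ih (FreeMagma.mul x y * FreeMagma.of ()) rfl]
        simp [countSq, FreeMagma.isLeaf, ← FreeMagma.mul_eq]
      · rw [ih (FreeMagma.of () * FreeMagma.mul x y) rfl]
        simp [countSq, FreeMagma.isLeaf, ← FreeMagma.mul_eq]

lemma chain_inj (l₁ : List (Fin 2)) : ∀ (l₂ : List (Fin 2)) (t₁ t₂ : FreeMagma Unit),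
    t₁.isLeaf = false → t₂.isLeaf = false → l₁.length = l₂.length →
    chain t₁ l₁ = chain t₂ l₂ → t₁ = t₂ ∧ l₁ = l₂ := by
  induction l₁ with
  | nil =>
    intro l₂ t₁ t₂ _ _ hlen h
    cases l₂ with
    | nil => exact ⟨h, rfl⟩
    | cons b r => simp at hlen
  | cons b r ih =>
    intro l₂ t₁ t₂ h₁ h₂ hlen h
    cases l₂ with
    | nil => simp at hlen
    | cons b' r' =>
      simp only [chain] at h
      simp only [List.length_cons, Nat.succ.injEq] at hlen
      cases t₁ with
      | of x => simp [FreeMagma.isLeaf] at h₁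
      | mul x y =>
      cases t₂ with
      | of x' => simp [FreeMagma.isLeaf] at h₂
      | mul x' y' =>
      obtain ⟨hstep, hr⟩ := ih r' _ _ (by split <;> rfl) (by split <;> rfl) hlen h
      subst hr
      have htwo : ∀ c : Fin 2, c = 0 ∨ c = 1 := by decide
      rcases htwo b with rfl | rfl <;> rcases htwo b' with rfl | rfl <;>
        simp only [show ¬((0:Fin 2) = 1) by decide, if_neg, if_pos, reduceIte,
          ← FreeMagma.mul_eq] at hstep <;>
        injection hstep with ha hb2 <;>
        first
          | (cases ha; done)
          | exact ⟨hb2, rfl⟩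
          | exact ⟨ha, rfl⟩

lemma aSq_not_leaf : aSq.isLeaf = false := rfl

lemma countSq_chain_aSq (l : List (Fin 2)) : countSq (chain aSq l) = 1 := by
  rw [countSq_chain l aSq aSq_not_leaf]; rfl

/-- for `n ≥ 2`, the `2^(n-2)` elements `a²·w(L_a,R_a)`, as `w` runs over
all words of length `n-2` in `L_a, R_a`, are linearly independent in `A = FA F / relI F`. -/
theorem chains_linearIndependent (n : ℕ) (hn : 2 ≤ n) :
    LinearIndependent F
      (fun u : {l : List (Fin 2) // l.length = n - 2} =>
        (Submodule.Quotient.mk (mono F (chain aSq u.1)) : FA F ⧸ relI F)) := by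
  classical
  set S : Set (FreeMagma Unit) := {m | countSq m ≤ 1} with hS
  have hf : LinearIndependent F
      (fun u : {l : List (Fin 2) // l.length = n - 2} => mono F (chain aSq u.1)) := by
    have hinj : Function.Injective
        (fun u : {l : List (Fin 2) // l.length = n - 2} => chain aSq u.1) := by
      intro u v h
      have := chain_inj u.1 v.1 aSq aSq aSq_not_leaf aSq_not_leaf
        (by rw [u.2, v.2]) h
      exact Subtype.ext this.2
    exact (MonoidAlgebra.basis (FreeMagma Unit) F).linearIndependent.comp _ hinj
  refine hf.map (f := (relI F).mkQ) ?_
  rw [Submodule.ker_mkQ, Submodule.disjoint_def]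
  intro x hx hxI
  have hxS : x ∈ MonoidAlgebra.supported F F S := by
    refine Submodule.span_le.2 ?_ hx
    rintro _ ⟨u, rfl⟩
    exact Finsupp.single_mem_supported F 1 (by simp [hS, countSq_chain_aSq])
  have hxK : ∀ m ∈ S, x.coeff m = 0 := by
    have hle : relI F ≤ ⨅ m ∈ S,
        LinearMap.ker ((Finsupp.lapply m).comp (MonoidAlgebra.coeffLinearEquiv F).toLinearMap : FA F →ₗ[F] F) := by
      refine Submodule.span_le.2 ?_
      rintro _ ⟨m, hm, rfl⟩
      simp only [SetLike.mem_coe, Submodule.mem_iInf, LinearMap.mem_ker, LinearMap.comp_apply, Finsupp.lapply_apply]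
      intro m' hm'
      have hne : m' ≠ m := by
        intro h; rw [hS] at hm'; simp only [Set.mem_setOf_eq, h] at hm'; omega
      exact Finsupp.single_eq_of_ne hne
    intro m hm
    have := hle hxI
    simp only [Submodule.mem_iInf, LinearMap.mem_ker, LinearMap.comp_apply, Finsupp.lapply_apply] at this
    exact this m hm
  ext m
  by_cases hm : m ∈ S
  · exact hxK m hm
  · exact (MonoidAlgebra.mem_supported' (R := F)).1 hxS m hm
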